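/- If τ i > 0 for all i and s is a critical point of the direct-uplift loss L (i.e., for every j the function t ↦ L(Function.update s j t) has derivative 0 at s j), then for every j one has q j = τ j / ∑_i τ i. -/

import Mathlib

/-- at a critical point of the direct-uplift loss, the softmax
values equal the normalized treatment effects. -/
theorem direct_uplift_critical_point
    (N : ℕ) (hN : 0 < N) (s τ : Fin N → ℝ)
    (L : (Fin N → ℝ) → ℝ)
    (hL : L = fun u : Fin N → ℝ =>
      -(1 / (N : ℝ)) * ∑ i, τ i * Real.log (Real.exp (u i) / ∑ k, Real.exp (u k)))
    (hτ : ∀ i, 0 < τ i)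
    (hcrit : ∀ j : Fin N, HasDerivAt (fun t : ℝ => L (Function.update s j t)) 0 (s j)) :
    ∀ j : Fin N, Real.exp (s j) / ∑ k, Real.exp (s k) = τ j / ∑ i, τ i := by
  intro j
  have hSpos : (0:ℝ) < ∑ k, Real.exp (s k) :=
    Finset.sum_pos (fun k _ => Real.exp_pos _) ⟨j, Finset.mem_univ j⟩
  have hτsum : (0:ℝ) < ∑ i, τ i :=
    Finset.sum_pos (fun i _ => hτ i) ⟨j, Finset.mem_univ j⟩
  set A := ∑ k ∈ Finset.univ.erase j, Real.exp (s k) with hA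
  have hA0 : 0 ≤ A := Finset.sum_nonneg fun k _ => (Real.exp_pos _).le
  set C := ∑ i ∈ Finset.univ.erase j, τ i * s i with hC
  have hrw : ∀ t, L (Function.update s j t)
      = -(1/(N:ℝ)) * ((τ j * t + C) - (∑ i, τ i) * Real.log (Real.exp t + A)) := by
    intro t
    rw [hL]
    have hsum : (∑ k, Real.exp (Function.update s j t k)) = Real.exp t + A := by
      rw [← Finset.add_sum_erase _ _ (Finset.mem_univ j), Function.update_self]
      congr 1
      exact Finset.sum_congr rfl fun k hk => by
        rw [Function.update_of_ne (Finset.ne_of_mem_erase hk)]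
    have hpos : 0 < Real.exp t + A :=
      lt_of_lt_of_le (Real.exp_pos t) (le_add_of_nonneg_right hA0)
    simp only
    rw [hsum]
    congr 1
    have key : ∀ i : Fin N, τ i * Real.log (Real.exp (Function.update s j t i) / (Real.exp t + A))
        = τ i * (Function.update s j t i) - τ i * Real.log (Real.exp t + A) := by
      intro i
      rw [Real.log_div (Real.exp_ne_zero _) (ne_of_gt hpos), Real.log_exp, mul_sub]
    rw [Finset.sum_congr rfl (fun i _ => key i), Finset.sum_sub_distrib, ← Finset.sum_mul]
    congr 1
    rw [← Finset.add_sum_erase _ _ (Finset.mem_univ j), Function.update_self]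
    congr 1
    exact Finset.sum_congr rfl fun k hk => by
      rw [Function.update_of_ne (Finset.ne_of_mem_erase hk)]
  have hS : Real.exp (s j) + A = ∑ k, Real.exp (s k) := by
    rw [hA, ← Finset.add_sum_erase _ _ (Finset.mem_univ j)]
  have hpos : 0 < Real.exp (s j) + A := by rw [hS]; exact hSpos
  have hd : HasDerivAt (fun t : ℝ => L (Function.update s j t))
      (-(1/(N:ℝ)) * (τ j - (∑ i, τ i) * (Real.exp (s j) / (Real.exp (s j) + A)))) (s j) := by
    have h1 : HasDerivAt (fun t : ℝ => Real.exp t + A) (Real.exp (s j)) (s j) :=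
      (Real.hasDerivAt_exp _).add_const A
    have h2 : HasDerivAt (fun t : ℝ => Real.log (Real.exp t + A))
        (Real.exp (s j) / (Real.exp (s j) + A)) (s j) := by
      have := (Real.hasDerivAt_log (ne_of_gt hpos)).comp (s j) h1
      simpa [div_eq_inv_mul, mul_comm, Function.comp_def] using this
    have h3 : HasDerivAt (fun t : ℝ => τ j * t + C) (τ j) (s j) := by
      simpa using ((hasDerivAt_id (s j)).const_mul (τ j)).add_const C
    have h4 := (h3.sub (h2.const_mul (∑ i, τ i))).const_mul (-(1/(N:ℝ)))
    have heq : (fun t => -(1/(N:ℝ)) * ((τ j * t + C) - (∑ i, τ i) * Real.log (Real.exp t + A)))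
        = fun t : ℝ => L (Function.update s j t) := funext fun t => (hrw t).symm
    rw [← heq]
    exact h4
  have h0 := (hcrit j).unique hd
  have hN' : (0:ℝ) < (N:ℝ) := Nat.cast_pos.mpr hN
  rw [hS] at h0
  have hkey : τ j = (∑ i, τ i) * (Real.exp (s j) / ∑ k, Real.exp (s k)) := by
    have h1N : (1/(N:ℝ)) ≠ 0 := by positivity
    have := mul_left_cancel₀ (neg_ne_zero.mpr h1N) (h0.symm.trans (by ring :
      (0:ℝ) = -(1/(N:ℝ)) * 0))
    linarith
  rw [hkey]
  field_simp
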